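/- arXiv:2001.01104 — 4 statements merged into one kernel-verified Lean document; each statement's English description precedes it below -/
import Mathlib

section
/- Let p be a prime, q = p^r with r ≥ 1, g ≥ 1, and let a be an integer with p ∤ a and a² < 4·q^g. Let R ⊂ ℂ be the set of complex roots of f(t) = t^{2g} + a·t^g + q^g. Then for every integer n ≥ 1, the map α ↦ α^n is injective on R if and only if gcd(n, g) = 1. -/
def weilS (a m : ℤ) : ℕ → ℤ
  | 0 => 2
  | 1 => -a
  | n + 2 => -a * weilS a m (n + 1) - m * weilS a m n

lemma weilS_complex (a m : ℤ) (x y : ℂ) (hsum : x + y = -(a : ℂ))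
    (hmul : x * y = (m : ℂ)) :
    ∀ n : ℕ, ((weilS a m n : ℤ) : ℂ) = x ^ n + y ^ n ∧
      ((weilS a m (n + 1) : ℤ) : ℂ) = x ^ (n + 1) + y ^ (n + 1) := by
  intro n
  induction n with
  | zero =>
    constructor
    · simp [weilS]; norm_num
    · simp [weilS, hsum]
  | succ n ih =>
    refine ⟨ih.2, ?_⟩
    have key : x ^ (n + 2) + y ^ (n + 2)
        = (x + y) * (x ^ (n + 1) + y ^ (n + 1)) - (x * y) * (x ^ n + y ^ n) := by
      ring
    rw [key, hsum, hmul, ← ih.1, ← ih.2]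
    show ((weilS a m (n + 2) : ℤ) : ℂ) = _
    rw [weilS]
    push_cast
    ring

lemma weilS_mod (p : ℕ) (a m : ℤ) (hm : (p : ℤ) ∣ m) :
    ∀ n : ℕ, (p : ℤ) ∣ weilS a m (n + 1) - (-a) ^ (n + 1) := by
  intro n
  induction n with
  | zero => simp [weilS]
  | succ n ih =>
    have hk : weilS a m (n + 2) - (-a) ^ (n + 2)
        = -a * (weilS a m (n + 1) - (-a) ^ (n + 1)) - m * weilS a m n := by
      rw [weilS]; ring
    rw [hk]
    exact dvd_sub (ih.mul_left _) (hm.mul_right _)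


/-- For an ordinary Weil-central polynomial `f(t) = t^(2g) + a t^g + q^g` (with `p ∤ a`,
`a² < 4 q^g`, `q = p^r`), the map `α ↦ α^n` is injective on the set of complex roots of `f`
if and only if `gcd(n, g) = 1`. -/
theorem stmt_2 (p r g : ℕ) (hp : p.Prime) (hr : 1 ≤ r) (hg : 1 ≤ g)
    (q : ℕ) (hq : q = p ^ r) (a : ℤ) (ha : ¬ (p : ℤ) ∣ a)
    (ha2 : a ^ 2 < 4 * (q : ℤ) ^ g)
    (R : Set ℂ) (hR : R = {α : ℂ | α ^ (2 * g) + (a : ℂ) * α ^ g + (q : ℂ) ^ g = 0}) :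
    ∀ n : ℕ, 1 ≤ n → (Set.InjOn (fun α : ℂ => α ^ n) R ↔ Nat.gcd n g = 1) := by
  intro n hn
  -- the integer m = q^g
  obtain ⟨m, hm⟩ : ∃ m : ℤ, m = (q : ℤ) ^ g := ⟨_, rfl⟩
  have hq0 : 0 < q := by
    rw [hq]; exact pow_pos hp.pos r
  have hpm : (p : ℤ) ∣ m := by
    rw [hm, hq]
    push_cast
    exact dvd_pow (dvd_pow_self _ (by omega)) (by omega)
  -- the discriminant
  have hD : (0 : ℝ) < 4 * (q : ℝ) ^ g - (a : ℝ) ^ 2 := by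
    have := ha2
    have : ((a : ℝ)) ^ 2 < 4 * (q : ℝ) ^ g := by exact_mod_cast ha2
    linarith
  set D : ℝ := 4 * (q : ℝ) ^ g - (a : ℝ) ^ 2 with hDdef
  set x : ℂ := (-(a : ℂ) + (Real.sqrt D : ℂ) * Complex.I) / 2 with hx
  set y : ℂ := (-(a : ℂ) - (Real.sqrt D : ℂ) * Complex.I) / 2 with hy
  have hsum : x + y = -(a : ℂ) := by rw [hx, hy]; ring
  have hsqD : ((Real.sqrt D : ℂ)) ^ 2 = (D : ℂ) := by
    rw [← Complex.ofReal_pow, Real.sq_sqrt hD.le]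
  have hmul : x * y = (m : ℂ) := by
    rw [hx, hy]
    have : x * y = ((a : ℂ) ^ 2 + (Real.sqrt D : ℂ) ^ 2) / 4 := by
      rw [hx, hy]; ring_nf; rw [Complex.I_sq]; ring
    rw [← hx, ← hy, this, hsqD]
    rw [hDdef, hm]
    push_cast
    ring
  have hmC : (m : ℂ) ≠ 0 := by
    rw [hm]; push_cast
    exact pow_ne_zero _ (by exact_mod_cast hq0.ne')
  have hx0 : x ≠ 0 := fun h => hmC (by rw [← hmul, h, zero_mul])
  have hy0 : y ≠ 0 := fun h => hmC (by rw [← hmul, h, mul_zero])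
  -- membership in R
  have hmq : x * y = (q : ℂ) ^ g := by rw [hmul, hm]; push_cast; ring
  have hmem : ∀ α : ℂ, α ∈ R ↔ (α ^ g = x ∨ α ^ g = y) := by
    intro α
    rw [hR]
    simp only [Set.mem_setOf_eq, pow_mul']
    constructor
    · intro h
      have hfac : (α ^ g - x) * (α ^ g - y) = 0 := by
        linear_combination h - (α ^ g) * hsum + hmq
      rcases mul_eq_zero.mp hfac with h' | h'
      · exact Or.inl (sub_eq_zero.mp h')
      · exact Or.inr (sub_eq_zero.mp h')
    · intro h
      have hfac : (α ^ g) ^ 2 + (a : ℂ) * α ^ g + (q : ℂ) ^ g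
          = (α ^ g - x) * (α ^ g - y) := by
        linear_combination (α ^ g) * hsum - hmq
      rcases h with h' | h' <;> rw [hfac, h'] <;> ring
  -- x^n ≠ y^n  (key ordinarity argument)
  have hkey : x ^ n ≠ y ^ n := by
    intro hxy
    set s : ℤ := weilS a m n with hs
    have hsC : (s : ℂ) = x ^ n + y ^ n := (weilS_complex a m x y hsum hmul n).1
    have h2 : (s : ℂ) = 2 * x ^ n := by rw [hsC, ← hxy]; ring
    have hsq : (s : ℂ) ^ 2 = 4 * (m : ℂ) ^ n := by
      rw [h2]
      have : x ^ n * y ^ n = (m : ℂ) ^ n := by rw [← mul_pow, hmul]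
      calc (2 * x ^ n) ^ 2 = 4 * (x ^ n * x ^ n) := by ring
        _ = 4 * (x ^ n * y ^ n) := by rw [hxy]
        _ = 4 * (m : ℂ) ^ n := by rw [this]
    have hsqZ : s ^ 2 = 4 * m ^ n := by
      have := hsq
      exact_mod_cast this
    have hpdvd : (p : ℤ) ∣ s ^ 2 := by
      rw [hsqZ]
      exact Dvd.dvd.mul_left (hpm.trans (dvd_pow_self m (by omega))) 4
    have hps : (p : ℤ) ∣ s := (Int.Prime.dvd_pow' (by exact_mod_cast hp) hpdvd)
    obtain ⟨n', rfl⟩ : ∃ n', n = n' + 1 := ⟨n - 1, by omega⟩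
    have := weilS_mod p a m hpm n'
    have hpa : (p : ℤ) ∣ (-a) ^ (n' + 1) := by
      have : (p : ℤ) ∣ s - (s - (-a) ^ (n' + 1)) := dvd_sub hps this
      simpa using this
    have : (p : ℤ) ∣ -a := (Int.Prime.dvd_pow' (by exact_mod_cast hp) hpa)
    exact ha ((dvd_neg.mp this))
  constructor
  · -- injective → gcd = 1
    intro hinj
    by_contra hgcd
    set d : ℕ := Nat.gcd n g with hd
    have hd1 : 2 ≤ d := by
      have : d ≠ 0 := Nat.gcd_ne_zero_right (by omega)
      omega
    obtain ⟨α, hα⟩ := IsAlgClosed.exists_pow_nat_eq x (by omega : 0 < g)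
    have hα0 : α ≠ 0 := by
      intro h; apply hx0; rw [← hα, h, zero_pow (by omega)]
    set ζ : ℂ := Complex.exp (2 * Real.pi * Complex.I / d) with hζ
    have hprim : IsPrimitiveRoot ζ d := Complex.isPrimitiveRoot_exp d (by omega)
    have hζ1 : ζ ≠ 1 := by
      intro h
      have := hprim.pow_ne_one_of_pos_of_lt (by norm_num) (by omega : 1 < d)
      simp [h] at this
    have hζg : ζ ^ g = 1 := hprim.pow_eq_one_iff_dvd g |>.mpr (Nat.gcd_dvd_right n g)
    have hζn : ζ ^ n = 1 := hprim.pow_eq_one_iff_dvd n |>.mpr (Nat.gcd_dvd_left n g)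
    have hmem1 : α ∈ R := (hmem α).mpr (Or.inl hα)
    have hmem2 : ζ * α ∈ R := by
      refine (hmem _).mpr (Or.inl ?_)
      rw [mul_pow, hζg, one_mul, hα]
    have heq : (fun β : ℂ => β ^ n) (ζ * α) = (fun β : ℂ => β ^ n) α := by
      simp only [mul_pow, hζn, one_mul]
    have h21 := hinj hmem2 hmem1 heq
    exact hζ1 (mul_right_cancel₀ hα0 (by rw [h21, one_mul]))
  · -- gcd = 1 → injective
    intro hgcd α hαR β hβR hab
    simp only at hab
    have hroot : ∀ u : ℂ, u ^ n = 1 → u ^ g = 1 → u = 1 := by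
      intro u hun hug
      have : orderOf u ∣ Nat.gcd n g :=
        Nat.dvd_gcd (orderOf_dvd_of_pow_eq_one hun) (orderOf_dvd_of_pow_eq_one hug)
      rw [hgcd, Nat.dvd_one] at this
      exact orderOf_eq_one_iff.mp this
    have hsame : ∀ γ δ : ℂ, γ ^ g = δ ^ g → δ ≠ 0 → γ ^ n = δ ^ n → γ = δ := by
      intro γ δ hgg hδ hnn
      have hug : (γ / δ) ^ g = 1 := by rw [div_pow, hgg, div_self (pow_ne_zero _ hδ)]
      have hun : (γ / δ) ^ n = 1 := by rw [div_pow, hnn, div_self (pow_ne_zero _ hδ)]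
      have := hroot _ hun hug
      field_simp at this
      exact this
    rcases (hmem α).mp hαR with hA | hA <;> rcases (hmem β).mp hβR with hB | hB
    · exact hsame α β (by rw [hA, hB]) (fun h => hx0 (by rw [← hB, h, zero_pow (by omega)])) hab
    · exfalso
      apply hkey
      calc x ^ n = (α ^ g) ^ n := by rw [hA]
        _ = (α ^ n) ^ g := by rw [← pow_mul, ← pow_mul, mul_comm]
        _ = (β ^ n) ^ g := by rw [hab]
        _ = (β ^ g) ^ n := by rw [← pow_mul, ← pow_mul, mul_comm]
        _ = y ^ n := by rw [hB]
    · exfalso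
      apply hkey
      calc x ^ n = (β ^ g) ^ n := by rw [hB]
        _ = (β ^ n) ^ g := by rw [← pow_mul, ← pow_mul, mul_comm]
        _ = (α ^ n) ^ g := by rw [hab]
        _ = (α ^ g) ^ n := by rw [← pow_mul, ← pow_mul, mul_comm]
        _ = y ^ n := by rw [hA]
    · exact hsame α β (by rw [hA, hB]) (fun h => hy0 (by rw [← hB, h, zero_pow (by omega)])) hab
end

section
/- Let p be a prime, q = p^r with r ≥ 1, g ≥ 1, and let a be an integer with p ∤ a and a² < 4·q^g. If α ∈ ℂ is a root of x² + a·x + q^g, then for every integer n ≥ 1, α^n is not a real number. -/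
/-- If `α` is a root of `x² + a x + q^g` with `p ∤ a` and `a² < 4 q^g` (`q = p^r`, `p` prime),
then no positive power `α^n` is real. -/
theorem stmt_4 (p r g : ℕ) (hp : p.Prime) (hr : 1 ≤ r) (hg : 1 ≤ g)
    (q : ℕ) (hq : q = p ^ r) (a : ℤ) (ha : ¬ (p : ℤ) ∣ a)
    (ha2 : a ^ 2 < 4 * (q : ℤ) ^ g)
    (α : ℂ) (hα : α ^ 2 + (a : ℂ) * α + (q : ℂ) ^ g = 0) :
    ∀ n : ℕ, 1 ≤ n → (α ^ n).im ≠ 0 := by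
  have hq0 : 0 < q := hq ▸ pow_pos hp.pos r
  have hqg0 : (0:ℤ) < (q:ℤ) ^ g := by positivity
  have him : α.im ≠ 0 := by
    intro h
    have hre : α = (α.re : ℂ) := (Complex.re_add_im α) ▸ by simp [h]
    rw [hre] at hα
    have hR : (α.re) ^ 2 + (a:ℝ) * α.re + (q:ℝ) ^ g = 0 := by exact_mod_cast hα
    have ha2R : (a:ℝ) ^ 2 < 4 * (q:ℝ) ^ g := by exact_mod_cast ha2
    nlinarith [sq_nonneg (2 * α.re + (a:ℝ))]
  set β := (starRingEnd ℂ) α with hβ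
  have hβα : β ≠ α := fun h => him ((Complex.conj_eq_iff_im).mp h)
  have hβroot : β ^ 2 + (a : ℂ) * β + (q : ℂ) ^ g = 0 := by
    have := congrArg (starRingEnd ℂ) hα
    simpa [hβ, map_pow, map_add, map_mul] using this
  have hsum : α + β = -(a : ℂ) := by
    have h1 : (α - β) * (α + β + a) = 0 := by linear_combination hα - hβroot
    rcases mul_eq_zero.mp h1 with h | h
    · exact absurd (sub_eq_zero.mp h).symm hβα
    · linear_combination h
  have hprod : α * β = (q : ℂ) ^ g := by linear_combination α * hsum - hα
  have hα0 : α ≠ 0 := by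
    intro h
    rw [h, zero_mul] at hprod
    have : ((q:ℤ):ℂ) ^ g = 0 := by exact_mod_cast hprod.symm
    simp at this
    omega
  have hβ0 : β ≠ 0 := by rw [hβ]; exact (map_ne_zero (starRingEnd ℂ)).mpr hα0
  intro n hn himn
  -- α^n is real, so conj (α^n) = α^n
  have hconj : β ^ n = α ^ n := by
    rw [hβ, ← map_pow]
    exact (Complex.conj_eq_iff_im).mpr himn
  set ζ : ℂ := α / β with hζ
  have hζn : ζ ^ n = 1 := by
    rw [hζ, div_pow, hconj, div_self (pow_ne_zero n hα0)]
  have hζ0 : ζ ≠ 0 := div_ne_zero hα0 hβ0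
  -- ζ and ζ⁻¹ are algebraic integers
  have hζint : IsIntegral ℤ ζ := by
    have h1 : IsIntegral ℤ (ζ ^ n) := hζn ▸ isIntegral_one
    exact h1.of_pow (by omega)
  have hζinvint : IsIntegral ℤ ζ⁻¹ := by
    have : ζ⁻¹ = ζ ^ (n - 1) := by
      field_simp
      rw [← pow_succ', show n - 1 + 1 = n by omega, hζn]
    rw [this]
    exact hζint.pow _
  have htint : IsIntegral ℤ (ζ + ζ⁻¹) := hζint.add hζinvint
  -- ζ + ζ⁻¹ = (a² - 2 q^g)/q^g
  have h1 : ζ * ((q:ℂ) ^ g) = α ^ 2 := by rw [hζ, ← hprod]; field_simp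
  have h2 : ζ⁻¹ * ((q:ℂ) ^ g) = β ^ 2 := by rw [hζ, inv_div, ← hprod]; field_simp
  have hval : (ζ + ζ⁻¹) * ((q:ℂ) ^ g) = (a:ℂ) ^ 2 - 2 * (q:ℂ) ^ g := by
    rw [add_mul, h1, h2]
    linear_combination (α + β - (a:ℂ)) * hsum - 2 * hprod
  -- express as rational
  set s : ℚ := ((a:ℚ) ^ 2 - 2 * (q:ℚ) ^ g) / ((q:ℚ) ^ g) with hs
  have hsc : (algebraMap ℚ ℂ) s = ζ + ζ⁻¹ := by
    have hq0C : ((q:ℂ)) ^ g ≠ 0 := by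
      intro h
      have : ((q:ℤ):ℂ) ^ g = 0 := by exact_mod_cast h
      simp at this; omega
    rw [hs]
    push_cast
    rw [div_eq_iff hq0C]
    exact hval.symm
  have hsint : IsIntegral ℤ s := by
    rw [← isIntegral_algebraMap_iff (algebraMap ℚ ℂ).injective]
    rw [hsc]; exact htint
  obtain ⟨m, hm⟩ := IsIntegrallyClosed.isIntegral_iff.mp hsint
  -- q^g * m = a^2 - 2 q^g in ℤ
  have hqQ : ((q:ℚ)) ^ g ≠ 0 := by positivity
  have hmq : ((m:ℚ)) * (q:ℚ) ^ g = (a:ℚ) ^ 2 - 2 * (q:ℚ) ^ g := by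
    have : (m:ℚ) = s := hm
    rw [this, hs, div_mul_cancel₀ _ hqQ]
  have hmz : m * (q:ℤ) ^ g = a ^ 2 - 2 * (q:ℤ) ^ g := by exact_mod_cast hmq
  have hdvd : (q:ℤ) ^ g ∣ a ^ 2 := ⟨m + 2, by linarith [hmz]⟩
  have hpq : (p:ℤ) ∣ (q:ℤ) ^ g := by
    rw [hq]
    push_cast
    exact dvd_pow (dvd_pow_self _ (by omega)) (by omega)
  have hpa2 : (p:ℤ) ∣ a ^ 2 := hpq.trans hdvd
  have hpp : Prime ((p:ℤ)) := Nat.prime_iff_prime_int.mp hp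
  exact ha (hpp.dvd_of_dvd_pow hpa2)
end

section
/- For every positive integer m let P_m(x) = Σ_{j=0}^{m-1} x^j ∈ ℤ[x]. Then for every odd integer n ≥ 1 the following polynomial identity holds in ℤ[x]: P_n(x) = (x + 1)^{n-1} - Σ_{i=1}^{(n-1)/2} [binom(n,i) - 2·binom(n-1,i-1)] · x^i · P_{n-2i}(x), with P_1(x) = 1. -/
open Polynomial Finset

private def ee (h j : ℕ) : ℤ := ((2*h+1).choose j : ℤ) - 2 * ((2*h).choose j : ℤ)

private lemma expand_pow (m : ℕ) : ((X : Polynomial ℤ) + 1) ^ m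
    = ∑ j ∈ range (m+1), C ((m.choose j : ℤ)) * X ^ j := by
  rw [add_pow]
  refine Finset.sum_congr rfl fun j hj => ?_
  simp [Polynomial.C_eq_natCast, mul_comm]

private lemma keyA (h : ℕ) : ((X : Polynomial ℤ) - 1) * (X + 1) ^ (2*h)
    = ∑ j ∈ range (2*h+2), C (ee h j) * X ^ j := by
  have h1 := expand_pow (2*h+1)
  have h3 : ((X : Polynomial ℤ) + 1) ^ (2*h)
      = ∑ j ∈ range (2*h+2), C (((2*h).choose j : ℤ)) * X ^ j := by
    rw [Finset.sum_range_succ, Nat.choose_eq_zero_of_lt (by omega)]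
    simp [expand_pow (2*h)]
  have key : ((X : Polynomial ℤ) - 1) * (X+1)^(2*h) = (X+1)^(2*h+1) - 2*(X+1)^(2*h) := by
    ring
  rw [key, h1, h3, Finset.mul_sum, ← Finset.sum_sub_distrib]
  refine Finset.sum_congr rfl fun j hj => ?_
  simp only [ee, C_sub, C_mul, map_ofNat]
  ring

private lemma keyB (h : ℕ) :
    (X : Polynomial ℤ) ^ (2*h+1) - 1
      = (X - 1) * (X + 1) ^ (2*h)
        - ∑ i ∈ Finset.Icc 1 h,
            C (((2*h+1).choose i : ℤ) - 2 * (((2*h).choose (i-1) : ℤ))) * X ^ i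
              * (X ^ (2*h+1-2*i) - 1) := by
  have hterm : ∀ i ∈ Finset.Icc 1 h,
      C (((2*h+1).choose i : ℤ) - 2 * (((2*h).choose (i-1) : ℤ))) * X ^ i * (X ^ (2*h+1-2*i) - 1)
        = C (ee h (2*h+1-i)) * X ^ (2*h+1-i) + C (ee h i) * (X : Polynomial ℤ) ^ i := by
    intro i hi
    simp only [Finset.mem_Icc] at hi
    obtain ⟨hi1, hi2⟩ := hi
    obtain ⟨j, rfl⟩ : ∃ j, i = j + 1 := ⟨i - 1, by omega⟩
    have c1 : (2*h+1).choose (2*h+1-(j+1)) = (2*h+1).choose (j+1) := Nat.choose_symm (by omega)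
    have c2 : (2*h).choose (2*h+1-(j+1)) = (2*h).choose j := by
      rw [show 2*h+1-(j+1) = 2*h - j by omega]
      exact Nat.choose_symm (by omega)
    have e1 : ee h (2*h+1-(j+1)) = ((2*h+1).choose (j+1) : ℤ) - 2 * ((2*h).choose j : ℤ) := by
      unfold ee; rw [c1, c2]
    have e2 : ee h (j+1) = -(((2*h+1).choose (j+1) : ℤ) - 2 * ((2*h).choose j : ℤ)) := by
      unfold ee
      have hp : (2*h+1).choose (j+1) = (2*h).choose j + (2*h).choose (j+1) :=
        Nat.choose_succ_succ _ _
      rw [hp]; push_cast; ring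
    have hpow : (X : Polynomial ℤ) ^ (j+1) * X ^ (2*h+1-2*(j+1)) = X ^ (2*h+1-(j+1)) := by
      rw [← pow_add]; congr 1; omega
    rw [e1, e2, Nat.add_sub_cancel, map_neg, mul_sub, mul_one, mul_assoc, hpow]
    ring
  rw [Finset.sum_congr rfl hterm, Finset.sum_add_distrib]
  have hrefl : ∑ i ∈ Finset.Icc 1 h, C (ee h (2*h+1-i)) * (X : Polynomial ℤ) ^ (2*h+1-i)
      = ∑ j ∈ Finset.Icc (h+1) (2*h), C (ee h j) * X ^ j := by
    refine Finset.sum_nbij' (fun i => 2*h+1-i) (fun j => 2*h+1-j) ?_ ?_ ?_ ?_ ?_ <;>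
      intro a ha <;> simp only [Finset.mem_Icc] at * <;> omega
  have hIcc1 : Finset.Icc 1 h = Finset.Ioc 0 h := by
    ext x; simp [Nat.lt_iff_add_one_le]
  have hIcc2 : Finset.Icc (h+1) (2*h) = Finset.Ioc h (2*h) := Finset.Icc_add_one_left_eq_Ioc h (2*h)
  have hIcc3 : Finset.Icc 1 (2*h) = Finset.Ioc 0 (2*h) := by
    ext x; simp [Nat.lt_iff_add_one_le]
  have hcomb : (∑ j ∈ Finset.Icc (h+1) (2*h), C (ee h j) * (X : Polynomial ℤ) ^ j)
      + ∑ j ∈ Finset.Icc 1 h, C (ee h j) * X ^ j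
      = ∑ j ∈ Finset.Icc 1 (2*h), C (ee h j) * X ^ j := by
    rw [hIcc1, hIcc2, hIcc3, add_comm]
    exact Finset.sum_Ioc_consecutive _ (Nat.zero_le h) (by omega)
  have hrange : ∑ j ∈ range (2*h+2), C (ee h j) * (X : Polynomial ℤ) ^ j
      = C (ee h 0) + (∑ j ∈ Finset.Icc 1 (2*h), C (ee h j) * X ^ j)
        + C (ee h (2*h+1)) * X ^ (2*h+1) := by
    rw [Finset.sum_range_succ, Finset.sum_range_succ']
    have : ∑ i ∈ Finset.range (2*h), C (ee h (i+1)) * (X : Polynomial ℤ) ^ (i+1)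
        = ∑ j ∈ Finset.Icc 1 (2*h), C (ee h j) * X ^ j := by
      rw [← Finset.Ico_add_one_right_eq_Icc, Finset.sum_Ico_eq_sum_range]
      refine Finset.sum_congr (by norm_num) fun i _ => by rw [Nat.add_comm]
    rw [this]
    ring
  have e0 : ee h 0 = -1 := by unfold ee; simp
  have etop : ee h (2*h+1) = 1 := by
    unfold ee
    rw [Nat.choose_self, Nat.choose_eq_zero_of_lt (by omega)]
    simp
  rw [hrefl, hcomb, keyA, hrange, e0, etop]
  simp only [map_one, map_neg, C_1]
  ring

open Polynomial in
/-- Recursion for `P_n(x) = 1 + x + ⋯ + x^(n-1)` for odd `n`. -/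
theorem stmt_5 (P : ℕ → Polynomial ℤ)
    (hP : ∀ m : ℕ, 1 ≤ m → P m = ∑ j ∈ Finset.range m, X ^ j) :
    ∀ n : ℕ, 1 ≤ n → Odd n →
      P n = (X + 1) ^ (n - 1) -
        ∑ i ∈ Finset.Icc 1 ((n - 1) / 2),
          C ((n.choose i : ℤ) - 2 * ((n - 1).choose (i - 1) : ℤ)) * X ^ i * P (n - 2 * i) := by
  intro n hn hodd
  obtain ⟨h, rfl⟩ := hodd
  have hsub : 2*h+1-1 = 2*h := by omega
  rw [hsub]
  have hdiv : 2*h/2 = h := by omega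
  rw [hdiv]
  have hX : (X : Polynomial ℤ) - 1 ≠ 0 := fun hc => by
    have := congrArg (Polynomial.eval 0) hc
    simp at this
  apply mul_left_cancel₀ hX
  rw [hP _ (by omega), mul_comm ((X : Polynomial ℤ) - 1), geom_sum_mul, mul_sub, Finset.mul_sum]
  have hterm : ∀ i ∈ Finset.Icc 1 h,
      ((X : Polynomial ℤ) - 1) *
        (C (((2*h+1).choose i : ℤ) - 2 * (((2*h).choose (i-1) : ℤ))) * X ^ i * P (2*h+1 - 2*i))
      = C (((2*h+1).choose i : ℤ) - 2 * (((2*h).choose (i-1) : ℤ))) * X ^ i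
          * (X ^ (2*h+1-2*i) - 1) := by
    intro i hi
    simp only [Finset.mem_Icc] at hi
    rw [hP _ (by omega)]
    calc ((X : Polynomial ℤ) - 1) *
          (C (((2*h+1).choose i : ℤ) - 2 * (((2*h).choose (i-1) : ℤ))) * X ^ i
            * ∑ j ∈ Finset.range (2*h+1-2*i), X ^ j)
        = C (((2*h+1).choose i : ℤ) - 2 * (((2*h).choose (i-1) : ℤ))) * X ^ i
            * ((∑ j ∈ Finset.range (2*h+1-2*i), X ^ j) * (X - 1)) := by ring
      _ = _ := by rw [geom_sum_mul]
  rw [Finset.sum_congr rfl hterm]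
  exact keyB h
end

section
/- Let g ≥ 1, let a, q be integers with q ≥ 2, and let ℓ be a prime with ℓ ∤ g and ℓ ∤ (q^g - 1) and ℓ ∤ q. Define a_0 = -1, a_1 = a, and for n ≥ 2, a_n = (-1)^n a^n - Σ_{i=1}^{⌊n/2⌋} binom(n,i) a_{n-2i} q^{g·i}; set N_n = q^{g·n} + a_n + 1. Let ω be the multiplicative order of q^g modulo ℓ. Then for every integer n ≥ 1 with gcd(n, g) = 1 and ω ∤ n, it is not the case that both ℓ² ∣ N_n and ℓ ∣ g(a_n + 2). -/
/-- If `ℓ ∤ g`, `ℓ ∤ q^g - 1` and `ℓ ∤ q`, then for every `n` coprime to `g` with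
`ω = ord_ℓ(q^g) ∤ n`, the extension `𝒜_n` satisfies the `ℓ`-cyclicity criterion:
not both `ℓ² ∣ N_n` and `ℓ ∣ g(a_n + 2)`. -/
theorem stmt_9 (g : ℕ) (hg : 1 ≤ g) (a q : ℤ) (hq : 2 ≤ q)
    (ℓ : ℕ) (hℓ : ℓ.Prime)
    (hlg : ¬ (ℓ : ℤ) ∣ (g : ℤ)) (hlq1 : ¬ (ℓ : ℤ) ∣ (q ^ g - 1)) (hlq : ¬ (ℓ : ℤ) ∣ q)
    (A : ℕ → ℤ) (hA0 : A 0 = -1) (hA1 : A 1 = a)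
    (hA : ∀ n : ℕ, 2 ≤ n → A n = (-1) ^ n * a ^ n -
      ∑ i ∈ Finset.Icc 1 (n / 2), (n.choose i : ℤ) * A (n - 2 * i) * q ^ (g * i))
    (N : ℕ → ℤ) (hN : ∀ n : ℕ, N n = q ^ (g * n) + A n + 1)
    (ω : ℕ) (hω : ω = orderOf ((q : ZMod ℓ) ^ g)) :
    ∀ n : ℕ, 1 ≤ n → Nat.gcd n g = 1 → ¬ ω ∣ n →
      ¬ ((ℓ : ℤ) ^ 2 ∣ N n ∧ (ℓ : ℤ) ∣ (g : ℤ) * (A n + 2)) := by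
  intro n hn hgcd hωn ⟨h1, h2⟩
  have hp : Prime (ℓ : ℤ) := Nat.prime_iff_prime_int.mp hℓ
  have hd : (ℓ : ℤ) ∣ A n + 2 := (hp.dvd_mul.mp h2).resolve_left hlg
  have hN1 : (ℓ : ℤ) ∣ N n := dvd_trans (dvd_pow_self _ two_ne_zero) h1
  have hd2 : (ℓ : ℤ) ∣ q ^ (g * n) - 1 := by
    have : (ℓ : ℤ) ∣ _ := dvd_sub hN1 hd
    rw [hN n] at this
    convert this using 1
    ring
  have hz : ((q : ZMod ℓ) ^ g) ^ n = 1 := by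
    have := (ZMod.intCast_zmod_eq_zero_iff_dvd _ ℓ).mpr hd2
    push_cast at this
    rw [sub_eq_zero] at this
    rw [← pow_mul]
    exact_mod_cast this
  exact hωn (hω ▸ orderOf_dvd_of_pow_eq_one hz)
end
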